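/- Let F be an n×n nonnegative matrix (super-stochastic: some row sums may exceed 1), with R₁ = {s : Λ_s[F] < 1} and R₂ = {s : Λ_s[F] ≥ 1} both nonempty. Set α₁ = max{Λ_s[F] : Λ_s[F] < 1}, α₂ = min{F_{ij} : F_{ij} > 0}, α₃ = max{Λ_s[F] : Λ_s[F] ≥ 1}. Suppose that for every k ∈ R₂ there is a chain of strictly positive entries from some i ∈ R₁ to k, and let |C*| be the maximal chain length. If α₃^{|C*|+1} − (α₃ − α₁)α₂^{|C*|} < 1, then ‖F^{|C*|+1}‖_∞ < 1 and consequently ρ(F) < 1. -/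

import Mathlib

/-- Maximum absolute row sum norm. -/
noncomputable def infNorm {m : Type*} [Fintype m] (M : Matrix m m ℝ) : ℝ :=
  ⨆ i, ∑ j, |M i j|

/-- The spectral radius of a real square matrix. -/
noncomputable def specRad {n : ℕ} (M : Matrix (Fin n) (Fin n) ℝ) : ℝ :=
  ⨆ μ : spectrum ℂ (M.map (algebraMap ℝ ℂ)), ‖(μ : ℂ)‖

/-- A non-zero element chain of length `L ≥ 1` in `F` from `i` to `k`. -/
def MatChain {n : ℕ} (F : Matrix (Fin n) (Fin n) ℝ) (i k : Fin n) (L : ℕ) : Prop :=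
  1 ≤ L ∧ ∃ p : Fin (L + 1) → Fin n, p 0 = i ∧ p (Fin.last L) = k ∧
    (∀ t : Fin L, p t.succ ≠ p t.castSucc) ∧
    (∀ t : Fin L, 0 < F (p t.succ) (p t.castSucc))

attribute [local instance] Matrix.linftyOpNormedAddCommGroup Matrix.linftyOpNormedRing
  Matrix.linftyOpNormedAlgebra

section Aux

variable {n : ℕ} (F : Matrix (Fin n) (Fin n) ℝ)

lemma pow_entry_nonneg (hnn : ∀ i j, 0 ≤ F i j) :
    ∀ m i j, 0 ≤ (F ^ m) i j := by
  intro m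
  induction m with
  | zero => intro i j; simp [Matrix.one_apply]; positivity
  | succ m ih =>
      intro i j
      rw [pow_succ', Matrix.mul_apply]
      exact Finset.sum_nonneg fun t _ => mul_nonneg (hnn i t) (ih t j)

lemma rowsum_add (a b : ℕ) (k : Fin n) :
    ∑ j, (F ^ (a + b)) k j = ∑ t, (F ^ a) k t * ∑ j, (F ^ b) t j := by
  rw [pow_add]
  simp only [Matrix.mul_apply, Finset.mul_sum]
  exact Finset.sum_comm

lemma rowsum_succ (m : ℕ) (k : Fin n) :
    ∑ j, (F ^ (m + 1)) k j = ∑ t, F k t * ∑ j, (F ^ m) t j := by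
  have h := rowsum_add F 1 m k
  rw [add_comm] at h
  simpa using h

end Aux

theorem superStochastic_specRad_lt_one {n : ℕ} (F : Matrix (Fin n) (Fin n) ℝ)
    (hnn : ∀ i j, 0 ≤ F i j)
    (hR₁ : ∃ s, ∑ j, F s j < 1) (hR₂ : ∃ s, 1 ≤ ∑ j, F s j)
    (α₁ α₂ α₃ : ℝ)
    (hα₁ : IsGreatest {x | ∃ s, (∑ j, F s j) = x ∧ x < 1} α₁)
    (hα₂ : IsLeast {x | ∃ i j, F i j = x ∧ 0 < x} α₂)
    (hα₃ : IsGreatest {x | ∃ s, (∑ j, F s j) = x ∧ 1 ≤ x} α₃)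
    (Lstar : ℕ)
    (hchain : ∀ k, 1 ≤ (∑ j, F k j) → ∃ i, (∑ j, F i j) < 1 ∧
      ∃ L, L ≤ Lstar ∧ MatChain F i k L)
    (hmax : ∃ k, 1 ≤ (∑ j, F k j) ∧ ∃ i, (∑ j, F i j) < 1 ∧ MatChain F i k Lstar)
    (hcond : α₃ ^ (Lstar + 1) - (α₃ - α₁) * α₂ ^ Lstar < 1) :
    infNorm (F ^ (Lstar + 1)) < 1 ∧ specRad F < 1 := by
  obtain ⟨s₀, hs₀⟩ := hR₁
  haveI : Nonempty (Fin n) := ⟨s₀⟩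
  haveI : NeZero n := ⟨by rintro rfl; exact s₀.elim0⟩
  -- basic constants
  obtain ⟨-, -, -, hα₂pos⟩ := hα₂.1
  obtain ⟨-, -, hα₃1⟩ := hα₃.1
  have hα₁lt : α₁ < 1 := by obtain ⟨-, -, h⟩ := hα₁.1; exact h
  have hα₂le : ∀ i j, 0 < F i j → α₂ ≤ F i j := fun i j h => hα₂.2 ⟨i, j, rfl, h⟩
  have hrow3 : ∀ s, ∑ j, F s j ≤ α₃ := by
    intro s
    rcases lt_or_ge (∑ j, F s j) 1 with h | h
    · exact le_trans h.le hα₃1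
    · exact hα₃.2 ⟨s, rfl, h⟩
  have hrow1 : ∀ s, ∑ j, F s j < 1 → ∑ j, F s j ≤ α₁ := fun s h => hα₁.2 ⟨s, rfl, h⟩
  have hα₂₃ : α₂ ≤ α₃ := by
    obtain ⟨i, j, hij, -⟩ := hα₂.1
    calc α₂ = F i j := hij.symm
      _ ≤ ∑ t, F i t := Finset.single_le_sum (fun t _ => hnn i t) (Finset.mem_univ j)
      _ ≤ α₃ := hrow3 i
  have hα₃0 : (0:ℝ) ≤ α₃ := le_trans zero_le_one hα₃1
  -- row sums of powers are bounded by α₃ ^ m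
  have hbound : ∀ m k, ∑ j, (F ^ m) k j ≤ α₃ ^ m := by
    intro m
    induction m with
    | zero => intro k; simp [Matrix.one_apply]
    | succ m ih =>
        intro k
        rw [rowsum_succ F m k]
        calc ∑ t, F k t * ∑ j, (F ^ m) t j
            ≤ ∑ t, F k t * α₃ ^ m :=
              Finset.sum_le_sum fun t _ => mul_le_mul_of_nonneg_left (ih t) (hnn k t)
          _ = (∑ t, F k t) * α₃ ^ m := by rw [← Finset.sum_mul]
          _ ≤ α₃ * α₃ ^ m := mul_le_mul_of_nonneg_right (hrow3 k) (pow_nonneg hα₃0 m)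
          _ = α₃ ^ (m + 1) := (pow_succ' α₃ m).symm
  -- one propagation step along a positive entry
  have hstep : ∀ (m : ℕ) (k j : Fin n) (δ : ℝ), 0 ≤ δ → α₂ ≤ F k j →
      (∑ t, (F ^ m) j t) ≤ α₃ ^ m - δ →
      (∑ t, (F ^ (m + 1)) k t) ≤ α₃ ^ (m + 1) - α₂ * δ := by
    intro m k j δ hδ hkj hj
    rw [rowsum_succ F m k]
    have h1 : ∑ t, F k t * ∑ u, (F ^ m) t u
        ≤ ∑ t, (F k t * α₃ ^ m - if t = j then F k j * δ else 0) := by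
      refine Finset.sum_le_sum fun t _ => ?_
      by_cases ht : t = j
      · subst ht
        rw [if_pos rfl]
        have := mul_le_mul_of_nonneg_left hj (hnn k t)
        linarith [this]
      · simp only [if_neg ht, sub_zero]
        exact mul_le_mul_of_nonneg_left (hbound m t) (hnn k t)
    have h2 : ∑ t, (F k t * α₃ ^ m - if t = j then F k j * δ else 0)
        = (∑ t, F k t) * α₃ ^ m - F k j * δ := by
      rw [Finset.sum_sub_distrib, ← Finset.sum_mul, Finset.sum_ite_eq' Finset.univ j]
      simp
    have h3 : (∑ t, F k t) * α₃ ^ m ≤ α₃ ^ (m + 1) := by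
      rw [pow_succ']
      exact mul_le_mul_of_nonneg_right (hrow3 k) (pow_nonneg hα₃0 m)
    have h4 : α₂ * δ ≤ F k j * δ := mul_le_mul_of_nonneg_right hkj hδ
    linarith [h1, h2 ▸ h1]
  set B : ℝ := α₃ ^ (Lstar + 1) - (α₃ - α₁) * α₂ ^ Lstar with hB
  have hδnn : ∀ t : ℕ, (0:ℝ) ≤ (α₃ - α₁) * α₂ ^ t := fun t =>
    mul_nonneg (by linarith) (pow_nonneg hα₂pos.le t)
  -- chain propagation
  have hchainprop : ∀ (i k : Fin n) (L : ℕ), (∑ j, F i j) < 1 → MatChain F i k L →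
      ∑ t, (F ^ (L + 1)) k t ≤ α₃ ^ (L + 1) - (α₃ - α₁) * α₂ ^ L := by
    rintro i k L hi ⟨-, p, hp0, hpL, -, hppos⟩
    have key : ∀ t : ℕ, ∀ ht : t ≤ L,
        ∑ u, (F ^ (t + 1)) (p ⟨t, Nat.lt_succ_of_le ht⟩) u
          ≤ α₃ ^ (t + 1) - (α₃ - α₁) * α₂ ^ t := by
      intro t
      induction t with
      | zero =>
          intro ht
          have : p ⟨0, Nat.lt_succ_of_le ht⟩ = i := hp0
          rw [this]
          simp only [pow_one, pow_zero, mul_one]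
          have := hrow1 i hi
          simpa using by linarith [this]
      | succ t ih =>
          intro ht
          have ht' : t ≤ L := Nat.le_of_succ_le ht
          have htL : t < L := ht
          have hpos := hppos ⟨t, htL⟩
          have hsucc : (⟨t, htL⟩ : Fin L).succ = ⟨t + 1, Nat.lt_succ_of_le ht⟩ := rfl
          have hcast : (⟨t, htL⟩ : Fin L).castSucc = ⟨t, Nat.lt_succ_of_le ht'⟩ := rfl
          rw [hsucc, hcast] at hpos
          have hα₂F := hα₂le _ _ hpos
          have := hstep (t + 1) (p ⟨t + 1, Nat.lt_succ_of_le ht⟩)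
            (p ⟨t, Nat.lt_succ_of_le ht'⟩) ((α₃ - α₁) * α₂ ^ t) (hδnn t) hα₂F (ih ht')
          calc ∑ u, (F ^ (t + 1 + 1)) (p ⟨t + 1, Nat.lt_succ_of_le ht⟩) u
              ≤ α₃ ^ (t + 1 + 1) - α₂ * ((α₃ - α₁) * α₂ ^ t) := this
            _ = α₃ ^ (t + 1 + 1) - (α₃ - α₁) * α₂ ^ (t + 1) := by ring
    have := key L le_rfl
    have hlast : (⟨L, Nat.lt_succ_of_le le_rfl⟩ : Fin (L + 1)) = Fin.last L := rfl
    rw [hlast, hpL] at this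
    exact this
  -- all rows of F ^ (Lstar + 1) have row sum ≤ B
  have hrowB : ∀ k, ∑ j, (F ^ (Lstar + 1)) k j ≤ B := by
    intro k
    have hpowle : α₂ ^ Lstar ≤ α₃ ^ Lstar := pow_le_pow_left₀ hα₂pos.le hα₂₃ Lstar
    rcases lt_or_ge (∑ j, F k j) 1 with hk | hk
    · -- row in R₁
      rw [rowsum_succ F Lstar k]
      have h1 : ∑ t, F k t * ∑ j, (F ^ Lstar) t j ≤ (∑ t, F k t) * α₃ ^ Lstar := by
        rw [Finset.sum_mul]
        exact Finset.sum_le_sum fun t _ => mul_le_mul_of_nonneg_left (hbound Lstar t) (hnn k t)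
      have h2 : (∑ t, F k t) * α₃ ^ Lstar ≤ α₁ * α₃ ^ Lstar :=
        mul_le_mul_of_nonneg_right (hrow1 k hk) (pow_nonneg hα₃0 Lstar)
      have h3 : α₁ * α₃ ^ Lstar ≤ B := by
        rw [hB, pow_succ']
        nlinarith [hδnn Lstar, pow_nonneg hα₃0 Lstar]
      linarith
    · -- row in R₂
      obtain ⟨i, hi, L, hL, hMC⟩ := hchain k hk
      have hC := hchainprop i k L hi hMC
      set d := Lstar - L with hd
      have hLd : L + 1 + d = Lstar + 1 := by omega
      have hsplit : ∑ j, (F ^ (Lstar + 1)) k j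
          = ∑ t, (F ^ (L + 1)) k t * ∑ j, (F ^ d) t j := by
        rw [← hLd]; exact rowsum_add F (L + 1) d k
      rw [hsplit]
      have h1 : ∑ t, (F ^ (L + 1)) k t * ∑ j, (F ^ d) t j
          ≤ (∑ t, (F ^ (L + 1)) k t) * α₃ ^ d := by
        rw [Finset.sum_mul]
        exact Finset.sum_le_sum fun t _ =>
          mul_le_mul_of_nonneg_left (hbound d t) (pow_entry_nonneg F hnn (L + 1) k t)
      have h2 : (∑ t, (F ^ (L + 1)) k t) * α₃ ^ d
          ≤ (α₃ ^ (L + 1) - (α₃ - α₁) * α₂ ^ L) * α₃ ^ d :=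
        mul_le_mul_of_nonneg_right hC (pow_nonneg hα₃0 d)
      have h3 : (α₃ ^ (L + 1) - (α₃ - α₁) * α₂ ^ L) * α₃ ^ d ≤ B := by
        rw [hB]
        have e1 : α₃ ^ (L + 1) * α₃ ^ d = α₃ ^ (Lstar + 1) := by
          rw [← pow_add, hLd]
        have e2 : α₂ ^ L * α₂ ^ d = α₂ ^ Lstar := by
          rw [← pow_add]; congr 1; omega
        have e3 : α₂ ^ d ≤ α₃ ^ d := pow_le_pow_left₀ hα₂pos.le hα₂₃ d
        nlinarith [hδnn L, pow_nonneg hα₂pos.le L, pow_nonneg hα₂pos.le d,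
          mul_le_mul_of_nonneg_left e3 (mul_nonneg (by linarith : (0:ℝ) ≤ α₃ - α₁)
            (pow_nonneg hα₂pos.le L))]
      linarith
  -- infNorm bound
  have hinf : infNorm (F ^ (Lstar + 1)) < 1 := by
    unfold infNorm
    have : infNorm (F ^ (Lstar + 1)) ≤ max B 0 := by
      apply Real.iSup_le _ (le_max_right _ _)
      intro i
      have : ∑ j, |(F ^ (Lstar + 1)) i j| = ∑ j, (F ^ (Lstar + 1)) i j :=
        Finset.sum_congr rfl fun j _ => abs_of_nonneg (pow_entry_nonneg F hnn _ i j)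
      rw [this]
      exact le_max_of_le_left (hrowB i)
    exact lt_of_le_of_lt this (max_lt hcond one_pos)
  refine ⟨hinf, ?_⟩
  -- spectral radius
  set m := Lstar + 1 with hm
  set A := F.map (algebraMap ℝ ℂ) with hA
  have hAm : A ^ m = (F ^ m).map (algebraMap ℝ ℂ) := by
    have := map_pow ((algebraMap ℝ ℂ).mapMatrix) F m
    simpa [hA, RingHom.mapMatrix_apply] using this.symm
  have hnormAm : ‖A ^ m‖ < 1 := by
    have h0 : ‖A ^ m‖₊ < 1 := by
      rw [hAm, Matrix.linfty_opNNNorm_def]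
      rw [Finset.sup_lt_iff (by norm_num : (⊥ : NNReal) < 1)]
      intro i _
      have h1 : ∑ j, ‖((F ^ m).map (algebraMap ℝ ℂ)) i j‖₊ = ∑ j, ‖(F ^ m) i j‖₊ := by
        refine Finset.sum_congr rfl fun j _ => ?_
        simp [Matrix.map_apply]
      rw [h1, ← NNReal.coe_lt_coe, NNReal.coe_sum]
      have h2 : ∀ j, ((‖(F ^ m) i j‖₊ : NNReal) : ℝ) = (F ^ m) i j := fun j => by
        rw [coe_nnnorm, Real.norm_eq_abs, abs_of_nonneg (pow_entry_nonneg F hnn m i j)]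
      simp only [h2, NNReal.coe_one]
      exact lt_of_le_of_lt (hrowB i) hcond
    calc ‖A ^ m‖ = ((‖A ^ m‖₊ : NNReal) : ℝ) := (coe_nnnorm _).symm
      _ < 1 := by exact_mod_cast h0
  set N : ℝ := ‖A ^ m‖ with hN
  have hN0 : 0 ≤ N := norm_nonneg _
  set c : ℝ := N ^ ((m : ℝ)⁻¹) with hc
  have hm0 : m ≠ 0 := by omega
  have hc1 : c < 1 := Real.rpow_lt_one hN0 hnormAm (by positivity)
  have hμ : ∀ μ : spectrum ℂ A, ‖(μ : ℂ)‖ ≤ c := by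
    rintro ⟨μ, hμmem⟩
    have hpow : μ ^ m ∈ spectrum ℂ (A ^ m) := by
      have := spectrum.subset_polynomial_aeval A (Polynomial.X ^ m : Polynomial ℂ)
      simpa using this ⟨μ, hμmem, by simp⟩
    have h5 : ‖μ‖ ^ m ≤ N := by
      rw [← norm_pow]
      exact spectrum.norm_le_norm_of_mem hpow
    have h6 : (‖μ‖ ^ m) ^ ((m : ℝ)⁻¹) ≤ c :=
      Real.rpow_le_rpow (by positivity) h5 (by positivity)
    rw [Real.pow_rpow_inv_natCast (norm_nonneg _) hm0] at h6
    simpa using h6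
  have : specRad F ≤ c := by
    unfold specRad
    exact Real.iSup_le (fun μ => hμ μ) (Real.rpow_nonneg hN0 _)
  exact lt_of_le_of_lt this hc1
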